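/- arXiv:2007.02697 — 2 statements merged into one kernel-verified Lean document; each statement's English description precedes it below -/
import Mathlib

section
/- For every ε > 0 there exists N such that for all integers n ≥ N, the length ι(n) of the shortest addition chain producing n satisfies ι(n) ≤ log₂(n) + (1 + ε)·log₂(n)/log₂(log₂(n)). -/
/-- `IsAddChainWith k s r n` says that `s 1 = 1, s 2 = 2, …, s k = n` is an
addition chain producing `n`, with regulators `r`: every term `s i` with
`2 ≤ i ≤ k` satisfies `s i = s (i-1) + r i`, where the regulator `r i` equals
some earlier term `s j` with `1 ≤ j < i`.  The length of the chain is `k - 1`. -/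
def IsAddChainWith (k : ℕ) (s r : ℕ → ℕ) (n : ℕ) : Prop :=
  2 ≤ k ∧ s 1 = 1 ∧ s 2 = 2 ∧ s k = n ∧
    ∀ i, 2 ≤ i → i ≤ k → s i = s (i - 1) + r i ∧ ∃ j, 1 ≤ j ∧ j < i ∧ r i = s j
/-- `minChainLength n` is the length `ι(n)` of the shortest addition chain
producing `n`. -/
noncomputable def minChainLength (n : ℕ) : ℕ :=
  sInf {d : ℕ | ∃ (k : ℕ) (s r : ℕ → ℕ), IsAddChainWith k s r n ∧ d = k - 1}

/-- last element (with default 0) -/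
def lst (L : List ℕ) : ℕ := L.getD (L.length - 1) 0

/-- `Good L` : `L` lists the terms of a (star) addition chain. -/
def Good (L : List ℕ) : Prop :=
  2 ≤ L.length ∧ L.getD 0 0 = 1 ∧ L.getD 1 0 = 2 ∧
  ∀ i, 2 ≤ i → i < L.length → ∃ j, j < i ∧ L.getD i 0 = L.getD (i-1) 0 + L.getD j 0

lemma lst_snoc (L : List ℕ) (x : ℕ) : lst (L ++ [x]) = x := by
  unfold lst
  rw [List.length_append, List.length_singleton, Nat.add_sub_cancel,
    List.getD_append_right _ _ _ _ le_rfl, Nat.sub_self]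
  rfl

lemma Good.snoc {L : List ℕ} (hL : Good L) {y : ℕ} (hy : y ∈ L) :
    Good (L ++ [lst L + y]) := by
  obtain ⟨hlen, h0, h1, hstep⟩ := hL
  obtain ⟨b, hb, hby⟩ := List.mem_iff_getElem.mp hy
  refine ⟨by simp [List.length_append]; omega, ?_, ?_, ?_⟩
  · rw [List.getD_append _ _ _ _ (by omega)]; exact h0
  · rw [List.getD_append _ _ _ _ (by omega)]; exact h1
  · intro i h2 hilt
    rw [List.length_append, List.length_singleton] at hilt
    rcases Nat.lt_or_ge i L.length with h | h
    · obtain ⟨j, hj, he⟩ := hstep i h2 h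
      exact ⟨j, hj, by rw [List.getD_append _ _ _ _ h, List.getD_append _ _ _ _ (by omega),
        List.getD_append _ _ _ _ (by omega)]; exact he⟩
    · have hi : i = L.length := by omega
      refine ⟨b, by omega, ?_⟩
      rw [hi, List.getD_append_right _ _ _ _ le_rfl, Nat.sub_self,
        List.getD_append _ _ _ _ (by omega), List.getD_append _ _ _ _ (by omega)]
      show lst L + y = _
      unfold lst
      rw [List.getD_eq_getElem _ _ hb, hby]


lemma minChainLength_le {L : List ℕ} (hL : Good L) :
    minChainLength (lst L) ≤ L.length - 1 := by
  obtain ⟨hlen, h0, h1, hstep⟩ := hL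
  apply Nat.sInf_le
  refine ⟨L.length, fun i => L.getD (i-1) 0, fun i => L.getD (i-1) 0 - L.getD (i-2) 0,
    ⟨hlen, h0, h1, rfl, ?_⟩, rfl⟩
  intro i h2 hik
  rcases eq_or_lt_of_le h2 with h | h
  · refine ⟨?_, 1, le_rfl, by omega, ?_⟩
    · show L.getD (i-1) 0 = L.getD (i-1-1) 0 + (L.getD (i-1) 0 - L.getD (i-2) 0)
      rw [← h, show (2:ℕ)-1 = 1 from rfl, show (2:ℕ)-2 = 0 from rfl, h0, h1]
    · show L.getD (i-1) 0 - L.getD (i-2) 0 = L.getD (1-1) 0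
      rw [← h, show (2:ℕ)-1 = 1 from rfl, show (2:ℕ)-2 = 0 from rfl,
        h0, h1]
  · -- i ≥ 3, list index a = i - 1 ≥ 2
    obtain ⟨j, hj, he⟩ := hstep (i-1) (by omega) (by omega)
    have h1' : i - 1 - 1 = i - 2 := by omega
    rw [h1'] at he
    constructor
    · show L.getD (i-1) 0 = L.getD (i-1-1) 0 + (L.getD (i-1) 0 - L.getD (i-2) 0)
      rw [h1', he]
      omega
    · refine ⟨j+1, by omega, by omega, ?_⟩
      show L.getD (i-1) 0 - L.getD (i-2) 0 = L.getD (j+1-1) 0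
      rw [he, Nat.add_sub_cancel]
      omega

lemma lst_mem {L : List ℕ} (h : L ≠ []) : lst L ∈ L := by
  unfold lst
  rw [List.getD_eq_getElem _ _ (by have := List.length_pos_iff.mpr h; omega)]
  exact List.getElem_mem _

lemma Good.ne_nil {L : List ℕ} (hL : Good L) : L ≠ [] := by
  intro h; rw [h] at hL; exact absurd hL.1 (by simp)

/-- extend a good chain by `r` doublings followed by adding `d` (if `d ≠ 0`),
reaching `2^r * lst L + d`. -/
lemma Good.ext {L : List ℕ} (hL : Good L) (r d : ℕ) (hd : d = 0 ∨ d ∈ L) :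
    ∃ L', Good L' ∧ lst L' = 2^r * lst L + d ∧ L'.length ≤ L.length + r + 1 ∧
      ∀ x ∈ L, x ∈ L' := by
  -- first the doublings
  have key : ∀ r : ℕ, ∃ L', Good L' ∧ lst L' = 2^r * lst L ∧
      L'.length = L.length + r ∧ ∀ x ∈ L, x ∈ L' := by
    intro r
    induction r with
    | zero => exact ⟨L, hL, by ring_nf, rfl, fun x h => h⟩
    | succ r ih =>
      obtain ⟨M, hM, hlst, hlen, hsub⟩ := ih
      refine ⟨M ++ [lst M + lst M], hM.snoc (lst_mem hM.ne_nil), ?_, ?_, ?_⟩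
      · rw [lst_snoc, hlst]; ring
      · simp [hlen]; omega
      · intro x hx; exact List.mem_append_left _ (hsub x hx)
  obtain ⟨M, hM, hlst, hlen, hsub⟩ := key r
  rcases hd with h0 | hmem
  · exact ⟨M, hM, by rw [hlst, h0]; ring, by omega, hsub⟩
  · refine ⟨M ++ [lst M + d], hM.snoc (hsub d hmem), by rw [lst_snoc, hlst], ?_, ?_⟩
    · simp [hlen]
    · intro x hx; exact List.mem_append_left _ (hsub x hx)

lemma good_base (m : ℕ) (hm : 1 ≤ m) :
    Good (List.range' 1 (2^m)) ∧ lst (List.range' 1 (2^m)) = 2^m ∧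
      (List.range' 1 (2^m)).length = 2^m := by
  have h2 : 2 ≤ 2^m := by
    calc 2 = 2^1 := rfl
    _ ≤ 2^m := Nat.pow_le_pow_right (by norm_num) hm
  have hlen : (List.range' 1 (2^m)).length = 2^m := List.length_range'
  have hget : ∀ i, i < 2^m → (List.range' 1 (2^m)).getD i 0 = 1 + i := by
    intro i hi
    rw [List.getD_eq_getElem _ _ (by omega), List.getElem_range']
    simp
  refine ⟨⟨by omega, by rw [hget 0 (by omega)], by rw [hget 1 (by omega)], ?_⟩, ?_, hlen⟩
  · intro i h2i hi
    rw [hlen] at hi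
    refine ⟨0, by omega, ?_⟩
    rw [hget i hi, hget (i-1) (by omega), hget 0 (by omega)]
    omega
  · unfold lst
    rw [hlen, hget _ (by omega)]
    omega

lemma main_construction (m : ℕ) (hm : 1 ≤ m) : ∀ n, 2^m ≤ n →
    ∃ L, Good L ∧ lst L = n ∧ (∀ x, 1 ≤ x → x ≤ 2^m → x ∈ L) ∧
      L.length ≤ 2^m + 1 + (Nat.log 2 n - m) + (Nat.log 2 n - 1) / m := by
  intro n
  induction n using Nat.strong_induction_on with
  | _ n ih =>
  intro hn
  have h2 : 2 ≤ 2^m := by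
    calc 2 = 2^1 := rfl
    _ ≤ 2^m := Nat.pow_le_pow_right (by norm_num) hm
  have hn0 : n ≠ 0 := by omega
  have hmB : m ≤ Nat.log 2 n := (Nat.le_log_iff_pow_le (by norm_num) hn0).mpr hn
  have hBle : 2^(Nat.log 2 n) ≤ n := Nat.pow_log_le_self 2 hn0
  have hBlt : n < 2^(Nat.log 2 n + 1) := Nat.lt_pow_succ_log_self (by norm_num) n
  obtain ⟨hbase, hblst, hblen⟩ := good_base m hm
  have hbmem : ∀ x, 1 ≤ x → x ≤ 2^m → x ∈ List.range' 1 (2^m) := by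
    intro x h1 h2'
    rw [List.mem_range']
    exact ⟨x - 1, by omega, by omega⟩
  set B := Nat.log 2 n with hB
  rcases Nat.lt_or_ge n (2^(m+1)) with hsmall | hbig
  · -- base case : 2^m ≤ n < 2^(m+1)
    have hlenb : 2^m + 1 ≤ 2^m + 1 + (B - m) + (B-1)/m :=
      le_trans (by omega) (Nat.le_add_right _ _)
    rcases eq_or_lt_of_le hn with heq | hlt
    · exact ⟨_, hbase, by rw [hblst, ← heq], hbmem, by rw [hblen]; omega⟩
    · have hymem : n - 2^m ∈ List.range' 1 (2^m) := by
        apply hbmem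
        · omega
        · rw [pow_succ] at hsmall; omega
      refine ⟨_, hbase.snoc hymem, ?_, ?_, ?_⟩
      · rw [lst_snoc, hblst]; omega
      · intro x h1 h2'
        exact List.mem_append_left _ (hbmem x h1 h2')
      · rw [List.length_append, List.length_singleton, hblen]
        omega
  · -- recursive case : n ≥ 2^(m+1), so B ≥ m+1
    have hBm1 : m + 1 ≤ B := (Nat.le_log_iff_pow_le (by norm_num) hn0).mpr hbig
    set r := min m (B - m) with hr
    have hr1 : 1 ≤ r := by omega
    have hrm : r ≤ m := by omega
    have hrB : m + r ≤ B := by omega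
    set q := n / 2^r with hq
    have h2r : 0 < 2^r := Nat.pow_pos (by norm_num)
    have hqge : 2^m ≤ q := by
      rw [hq, Nat.le_div_iff_mul_le h2r, ← pow_add]
      exact le_trans (Nat.pow_le_pow_right (by norm_num) hrB) hBle
    have hqlt : q < n := Nat.div_lt_self (by omega) (by
      calc 1 < 2^1 := by norm_num
      _ ≤ 2^r := Nat.pow_le_pow_right (by norm_num) hr1)
    -- log of q
    have hlogq : Nat.log 2 q = B - r := by
      apply Nat.log_eq_of_pow_le_of_lt_pow
      · rw [hq, Nat.le_div_iff_mul_le h2r, ← pow_add]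
        exact le_trans (Nat.pow_le_pow_right (by norm_num) (by omega)) hBle
      · rw [hq]
        apply Nat.div_lt_of_lt_mul
        rw [← pow_add]
        exact lt_of_lt_of_le hBlt (Nat.pow_le_pow_right (by norm_num) (by omega))
    obtain ⟨L, hL, hlst, hmem, hlen⟩ := ih q hqlt hqge
    set d := n % 2^r with hd
    have hdlt : d < 2^r := Nat.mod_lt _ h2r
    have hdm : d = 0 ∨ d ∈ L := by
      rcases Nat.eq_zero_or_pos d with h0 | hpos
      · exact Or.inl h0
      · exact Or.inr (hmem d hpos (le_trans (le_of_lt hdlt) (Nat.pow_le_pow_right (by norm_num) hrm)))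
    obtain ⟨L', hL', hlst', hlen', hsub'⟩ := hL.ext r d hdm
    refine ⟨L', hL', ?_, fun x h1 h2' => hsub' x (hmem x h1 h2'), ?_⟩
    · rw [hlst', hlst, hq, hd]
      rw [mul_comm]; exact Nat.div_add_mod' n (2^r)
    · -- length bound
      rw [hlogq] at hlen
      have harith : (B - r - m) + (B - r - 1)/m + r + 1 ≤ (B - m) + (B-1)/m := by
        rcases le_or_gt m (B - m) with hc | hc
        · -- r = m
          have hrr : r = m := by omega
          have hdiv : (B - m - 1)/m + 1 = (B-1)/m := by
            rw [← Nat.add_div_right _ (by omega : 0 < m)]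
            congr 1
            omega
          rw [hrr]
          omega
        · -- r = B - m < m, so B - r = m
          have hrr : r = B - m := by omega
          have hd1 : (B - r - 1)/m = 0 := Nat.div_eq_of_lt (by omega)
          have hd2 : 1 ≤ (B-1)/m := by
            rw [Nat.le_div_iff_mul_le (by omega : 0 < m)]
            omega
          omega
      omega

lemma iota_real (m n : ℕ) (hm : 1 ≤ m) (hn : 2^m ≤ n) :
    (minChainLength n : ℝ) ≤ 2^m + Real.logb 2 n + Real.logb 2 n / m := by
  obtain ⟨L, hL, hlst, -, hlen⟩ := main_construction m hm n hn
  have h1 : minChainLength n ≤ 2^m + (Nat.log 2 n - m) + (Nat.log 2 n - 1)/m := by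
    have h2 := minChainLength_le hL
    rw [hlst] at h2
    have harith : ∀ a c u : ℕ, (a + 1 + c + u) - 1 ≤ a + c + u := by
      intro a c u; omega
    exact h2.trans ((Nat.sub_le_sub_right hlen 1).trans (harith _ _ _))
  have hm0 : (0:ℝ) < m := by exact_mod_cast hm
  have hlog : ((Nat.log 2 n : ℕ) : ℝ) ≤ Real.logb 2 n := by
    have := Real.natLog_le_logb n 2
    norm_num at this ⊢
    exact this
  calc (minChainLength n : ℝ)
      ≤ ((2^m + (Nat.log 2 n - m) + (Nat.log 2 n - 1)/m : ℕ) : ℝ) := by exact_mod_cast h1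
    _ ≤ 2^m + Real.logb 2 n + Real.logb 2 n / m := by
        push_cast
        have e1 : ((Nat.log 2 n - m : ℕ) : ℝ) ≤ Real.logb 2 n :=
          le_trans (by exact_mod_cast Nat.sub_le _ _) hlog
        have e2 : (((Nat.log 2 n - 1)/m : ℕ) : ℝ) ≤ Real.logb 2 n / m := by
          refine le_trans Nat.cast_div_le ?_
          gcongr
          exact le_trans (by exact_mod_cast Nat.sub_le _ _) hlog
        linarith

lemma hc_aux (ε δ : ℝ) (hε : 0 < ε) (hδ4 : δ ≤ 1/4) (hδε : δ ≤ ε/8) :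
    1 ≤ (1 + ε/2) * (1 - 2*δ) := by
  rcases le_or_gt ε 2 with h | h
  · nlinarith [mul_le_mul_of_nonneg_left hδε hε.le, sq_nonneg ε]
  · nlinarith [mul_le_mul_of_nonneg_left hδ4 hε.le]


set_option maxHeartbeats 1000000 in
/-- for every `ε > 0` there is `N` such that for all `n ≥ N`,
`ι(n) ≤ log₂ n + (1 + ε) · log₂ n / log₂ (log₂ n)`. -/
theorem min_chain_length_upper_bound :
    ∀ ε : ℝ, 0 < ε → ∃ N : ℕ, ∀ n : ℕ, N ≤ n →
      (minChainLength n : ℝ) ≤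
        Real.logb 2 n + (1 + ε) * Real.logb 2 n / Real.logb 2 (Real.logb 2 n) := by
  intro ε hε
  set δ : ℝ := min (1/4) (ε/8) with hδdef
  have hδpos : 0 < δ := by positivity
  have hδ4 : δ ≤ 1/4 := min_le_left _ _
  have hδε : δ ≤ ε/8 := min_le_right _ _
  -- eventual bound : log t ≤ c * t ^ δ
  have hlog2pos : (0:ℝ) < Real.log 2 := Real.log_pos one_lt_two
  have h1 : ∀ᶠ t : ℝ in Filter.atTop, Real.log t ≤ (ε/2 * Real.log 2) * t ^ δ := by
    have hb := (isLittleO_log_rpow_atTop hδpos).bound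
      (show (0:ℝ) < ε/2 * Real.log 2 by positivity)
    filter_upwards [hb, Filter.eventually_ge_atTop (0:ℝ)] with t ht ht0
    calc Real.log t ≤ |Real.log t| := le_abs_self _
      _ ≤ ε/2 * Real.log 2 * |t ^ δ| := by simpa using ht
      _ = ε/2 * Real.log 2 * t ^ δ := by rw [abs_of_nonneg (Real.rpow_nonneg ht0 δ)]
  have hid : ∀ᶠ t : ℝ in Filter.atTop, Real.logb 2 t ≤ t := by
    have hb := (isLittleO_log_rpow_atTop (show (0:ℝ) < 1 by norm_num)).bound hlog2pos
    filter_upwards [hb, Filter.eventually_ge_atTop (0:ℝ)] with t ht ht0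
    rw [Real.logb, div_le_iff₀ hlog2pos]
    calc Real.log t ≤ |Real.log t| := le_abs_self _
      _ ≤ Real.log 2 * |t ^ (1:ℝ)| := by simpa using ht
      _ = t * Real.log 2 := by
          rw [abs_of_nonneg (Real.rpow_nonneg ht0 _), Real.rpow_one]; ring
  have hx_t : Filter.Tendsto (fun n : ℕ => Real.logb 2 n) Filter.atTop Filter.atTop :=
    (Real.tendsto_logb_atTop one_lt_two).comp tendsto_natCast_atTop_atTop
  have hy_t : Filter.Tendsto (fun n : ℕ => Real.logb 2 (Real.logb 2 n))
      Filter.atTop Filter.atTop := (Real.tendsto_logb_atTop one_lt_two).comp hx_t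
  have big : ∀ᶠ n : ℕ in Filter.atTop,
      (minChainLength n : ℝ) ≤
        Real.logb 2 n + (1 + ε) * Real.logb 2 n / Real.logb 2 (Real.logb 2 n) := by
    filter_upwards [hx_t.eventually h1, hx_t.eventually (Filter.eventually_ge_atTop 1),
      hy_t.eventually (Filter.eventually_ge_atTop 2),
      hy_t.eventually (Filter.eventually_ge_atTop (1/δ)),
      tendsto_natCast_atTop_atTop.eventually hid] with n hA hx1 hy2 hyδ hxn
    set x := Real.logb 2 (n : ℝ) with hxdef
    set y := Real.logb 2 x with hydef
    have hxpos : 0 < x := by linarith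
    have hypos : 0 < y := by linarith
    -- the choice of m
    set m : ℕ := max 1 ⌊(1 - δ) * y⌋₊ with hmdef
    have hm1 : 1 ≤ m := le_max_left _ _
    have h1dy : 1 ≤ (1 - δ) * y := by nlinarith
    have hmle : (m : ℝ) ≤ (1 - δ) * y := by
      rw [hmdef]
      push_cast
      apply max_le
      · exact h1dy
      · exact Nat.floor_le (by linarith)
    have hmge : (1 - 2*δ) * y ≤ (m : ℝ) := by
      have h1' : (1 - δ) * y - 1 ≤ (⌊(1 - δ) * y⌋₊ : ℝ) := by
        have := Nat.sub_one_lt_floor ((1 - δ) * y)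
        linarith
      have h2' : (⌊(1 - δ) * y⌋₊ : ℝ) ≤ (m:ℝ) := by
        rw [hmdef]; push_cast; exact le_max_right _ _
      have hδy : 1 ≤ δ * y := by
        have := (div_le_iff₀ hδpos).mp hyδ
        nlinarith
      nlinarith
    have hmpos : (0:ℝ) < m := by nlinarith
    have h2y : (2:ℝ) ^ y = x := by
      rw [hydef]; exact Real.rpow_logb (by norm_num) (by norm_num) hxpos
    clear_value δ x y m
    have h2m : ((2^m : ℕ) : ℝ) ≤ x ^ (1 - δ) := by
      push_cast
      calc ((2:ℝ))^m = (2:ℝ) ^ (m:ℝ) := (Real.rpow_natCast 2 m).symm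
        _ ≤ (2:ℝ) ^ ((1-δ)*y) :=
            Real.rpow_le_rpow_of_exponent_le (by norm_num) hmle
        _ = ((2:ℝ) ^ y) ^ (1-δ) := by
            rw [mul_comm, ← Real.rpow_mul (by norm_num : (0:ℝ) ≤ 2)]
        _ = x ^ (1-δ) := by rw [h2y]
    have hxpow_le : x ^ (1-δ) ≤ x := by
      nth_rewrite 2 [← Real.rpow_one x]
      exact Real.rpow_le_rpow_of_exponent_le hx1 (by linarith)
    -- 2^m ≤ n as naturals
    have h2mn : 2^m ≤ n := by
      have : ((2^m : ℕ) : ℝ) ≤ (n : ℝ) := le_trans h2m (le_trans hxpow_le hxn)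
      exact_mod_cast this
    -- main inequality
    have hkey := iota_real m n hm1 h2mn
    rw [← hxdef] at hkey
    -- bound x / m
    have hxm : x / m ≤ (1 + ε/2) * x / y := by
      rw [div_le_div_iff₀ hmpos hypos]
      have e1 : (1 - 2*δ) * y * x ≤ (m:ℝ) * x := by nlinarith
      have hc : 1 ≤ (1 + ε/2) * (1 - 2*δ) := hc_aux ε δ hε hδ4 hδε
      have e2 : x * y ≤ (1 + ε/2) * x * ((1 - 2*δ) * y) := by
        calc x * y = 1 * (x * y) := by ring
          _ ≤ ((1 + ε/2) * (1 - 2*δ)) * (x * y) :=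
              mul_le_mul_of_nonneg_right hc (by positivity)
          _ = (1 + ε/2) * x * ((1 - 2*δ) * y) := by ring
      nlinarith
    -- bound 2^m
    have h2mbd : ((2^m : ℕ) : ℝ) ≤ (ε/2) * x / y := by
      refine le_trans h2m ?_
      rw [le_div_iff₀ hypos]
      have hyb : y ≤ (ε/2) * x ^ δ := by
        have : Real.log x ≤ ε/2 * Real.log 2 * x ^ δ := hA
        rw [hydef, Real.logb, div_le_iff₀ hlog2pos]
        linarith [this]
      calc x ^ (1-δ) * y ≤ x ^ (1-δ) * ((ε/2) * x ^ δ) := by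
            apply mul_le_mul_of_nonneg_left hyb (Real.rpow_nonneg (by linarith) _)
        _ = (ε/2) * (x ^ (1-δ) * x ^ δ) := by ring
        _ = (ε/2) * x := by
            rw [← Real.rpow_add hxpos]; norm_num
    calc (minChainLength n : ℝ) ≤ ((2^m : ℕ) : ℝ) + x + x / m := by push_cast at hkey ⊢; exact hkey
      _ ≤ (ε/2) * x / y + x + (1 + ε/2) * x / y := by linarith
      _ = x + (1 + ε) * x / y := by ring
  obtain ⟨N, hN⟩ := Filter.eventually_atTop.mp big
  exact ⟨N, hN⟩
end

section
/- No Ulam number beyond the first three is the sum of its two immediately preceding Ulam numbers: for every m > 3, U_m ≠ U_{m−1} + U_{m−2}. -/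
/-- `ulamRepCount l m` is the number of representations of `m` as a sum of two
distinct elements of the list `l`. -/
def ulamRepCount (l : List ℕ) (m : ℕ) : ℕ :=
  ((l.product l).filter (fun p => decide (p.1 < p.2 ∧ p.1 + p.2 = m))).length

open Classical in
/-- The smallest integer greater than the head of `l` having exactly one
representation as a sum of two distinct elements of `l` (and `0` if no such
integer exists). -/
noncomputable def nextUlam (l : List ℕ) : ℕ :=
  if h : ∃ m, l.headI < m ∧ ulamRepCount l m = 1 then Nat.find h else 0

/-- `ulamList n` is the list `[U_n, …, U_2, U_1]` of the first `n` Ulam numbers,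
newest first: `U_1 = 1`, `U_2 = 2`, and `U_{n+1}` is the smallest integer
greater than `U_n` with exactly one representation as a sum of two distinct
earlier Ulam numbers. -/
noncomputable def ulamList : ℕ → List ℕ
  | 0 => []
  | 1 => [1]
  | 2 => [2, 1]
  | n + 3 => nextUlam (ulamList (n + 2)) :: ulamList (n + 2)

/-- The `n`-th Ulam number (1-indexed): `ulam 1 = 1`, `ulam 2 = 2`, `ulam 3 = 3`, … -/
noncomputable def ulam (n : ℕ) : ℕ := (ulamList n).headI

lemma my_filter_len {α} [DecidableEq α] {l : List α} (h : l.Nodup) {a : α} (ha : a ∈ l) :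
    (l.filter (fun x => decide (x = a))).length = 1 := by
  induction l with
  | nil => simp at ha
  | cons b t ih =>
    rcases List.mem_cons.mp ha with rfl | ha'
    · have ht : t.filter (fun x => decide (x = a)) = [] := by
        refine List.filter_eq_nil_iff.mpr (fun x hx => ?_)
        simp only [decide_eq_true_eq]
        rintro rfl
        exact (List.nodup_cons.mp h).1 hx
      simp [List.filter_cons, ht]
    · have hne : b ≠ a := by rintro rfl; exact (List.nodup_cons.mp h).1 ha'
      simp [List.filter_cons, hne, ih (List.nodup_cons.mp h).2 ha']

/-- If `c` is an element of the tail `t`, and every pair inside `t` sums to less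
than `a + c`, then `a + c` has exactly one representation. -/
lemma repCount_eq_one (l : List ℕ) (hs : l.Pairwise (· > ·)) (a : ℕ) (t : List ℕ)
    (hl : l = a :: t) (c : ℕ) (hc : c ∈ t)
    (hgap : ∀ p q, p ∈ t → q ∈ t → p < q → p + q < a + c) :
    ulamRepCount l (a + c) = 1 := by
  have hnd : l.Nodup := hs.nodup
  have hat : ∀ x ∈ t, x < a := by
    have h' : (a :: t).Pairwise (· > ·) := hl ▸ hs
    intro x hx
    exact (List.pairwise_cons.mp h').1 x hx
  have hfc : ((l.product l).filter (fun p => decide (p.1 < p.2 ∧ p.1 + p.2 = a + c)))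
      = ((l.product l).filter (fun p => decide (p = ((c : ℕ), a)))) := by
    apply List.filter_congr
    rintro ⟨p, q⟩ hpq
    have hp : p ∈ l := (List.pair_mem_product.mp hpq).1
    have hq : q ∈ l := (List.pair_mem_product.mp hpq).2
    simp only [decide_eq_decide]
    constructor
    · rintro ⟨hlt, hsum⟩
      rcases List.mem_cons.mp (hl ▸ hq) with rfl | hq'
      · have : p = c := by omega
        simp [this]
      · have hqa : q < a := hat q hq'
        have hp' : p ∈ t := by
          rcases List.mem_cons.mp (hl ▸ hp) with rfl | h
          · omega
          · exact h
        have := hgap p q hp' hq' hlt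
        omega
    · intro h
      obtain ⟨rfl, rfl⟩ := Prod.mk.inj h
      exact ⟨hat p hc, by omega⟩
  have hmem : ((c : ℕ), a) ∈ l.product l :=
    List.pair_mem_product.mpr ⟨by rw [hl]; exact List.mem_cons_of_mem _ hc,
      by rw [hl]; exact List.mem_cons_self⟩
  unfold ulamRepCount
  rw [hfc]
  exact my_filter_len (hnd.product hnd) hmem

/-- There is always a next Ulam candidate: `a + b` (sum of two largest) works. -/
lemma exists_next (l : List ℕ) (hs : l.Pairwise (· > ·)) (a b : ℕ) (t : List ℕ)
    (hl : l = a :: b :: t) (hb : 0 < b) :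
    ∃ m, l.headI < m ∧ ulamRepCount l m = 1 := by
  have h' : (a :: b :: t).Pairwise (· > ·) := hl ▸ hs
  have hab : b < a := (List.pairwise_cons.mp h').1 b (by simp)
  have htb : ∀ x ∈ t, x < b := by
    intro x hx
    exact (List.pairwise_cons.mp ((List.pairwise_cons.mp h').2)).1 x hx
  refine ⟨a + b, ?_, ?_⟩
  · rw [hl]; simpa using by omega
  · refine repCount_eq_one l hs a (b :: t) hl b (by simp) ?_
    intro p q hp hq hpq
    have hqb : q ≤ b := by
      rcases List.mem_cons.mp hq with rfl | h
      · exact le_refl _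
      · exact le_of_lt (htb q h)
    omega

lemma ulamList_succ (n : ℕ) :
    ulamList (n + 3) = nextUlam (ulamList (n + 2)) :: ulamList (n + 2) := rfl

/-- Invariant: `ulamList (n+2)` is strictly decreasing with at least two
elements, the smaller of the two leading ones positive. -/
lemma ulam_inv (n : ℕ) : (ulamList (n + 2)).Pairwise (· > ·) ∧
    ∃ a b t, ulamList (n + 2) = a :: b :: t ∧ 0 < b := by
  induction n with
  | zero =>
    refine ⟨?_, 2, 1, [], rfl, one_pos⟩
    show ([2, 1] : List ℕ).Pairwise (· > ·)
    simp
  | succ k ih =>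
    obtain ⟨hs, a, b, t, hl, hb⟩ := ih
    have hex := exists_next _ hs a b t hl hb
    have hnu : nextUlam (ulamList (k + 2)) = Nat.find hex := dif_pos hex
    have hspec := Nat.find_spec hex
    have hgt : (ulamList (k + 2)).headI < Nat.find hex := hspec.1
    have hhead : (ulamList (k + 2)).headI = a := by rw [hl]; rfl
    have h' : (a :: b :: t).Pairwise (· > ·) := hl ▸ hs
    have hab : b < a := (List.pairwise_cons.mp h').1 b (by simp)
    have hall : ∀ x ∈ ulamList (k + 2), x < nextUlam (ulamList (k + 2)) := by
      intro x hx
      have hx' : x ∈ a :: b :: t := hl ▸ hx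
      rcases List.mem_cons.mp hx' with rfl | h
      · rw [hnu]; omega
      · have : x < a := (List.pairwise_cons.mp h').1 x h
        rw [hnu]; omega
    constructor
    · rw [ulamList_succ]
      exact List.pairwise_cons.mpr ⟨hall, hs⟩
    · exact ⟨nextUlam (ulamList (k + 2)), a, b :: t, by rw [ulamList_succ, hl], by omega⟩

/-- no Ulam number beyond the first three is the sum of its two
immediately preceding Ulam numbers: for `m > 3`, `U_m ≠ U_{m-1} + U_{m-2}`. -/
theorem ulam_ne_sum_pred (m : ℕ) (hm : 3 < m) :
    ulam m ≠ ulam (m - 1) + ulam (m - 2) := by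
  obtain ⟨k, rfl⟩ : ∃ k, m = k + 4 := ⟨m - 4, by omega⟩
  obtain ⟨hs2, a, b, t, hl2, hb⟩ := ulam_inv k
  obtain ⟨hs3, -⟩ := ulam_inv (k + 1)
  -- ulamList (k+3) = A :: a :: b :: t
  set A := nextUlam (ulamList (k + 2)) with hA
  have hl3 : ulamList (k + 3) = A :: a :: b :: t := by
    rw [ulamList_succ, ← hA, hl2]
  have hs3' : (A :: a :: b :: t).Pairwise (· > ·) := hl3 ▸ hs3
  have hs2' : (a :: b :: t).Pairwise (· > ·) := hl2 ▸ hs2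
  have hAa : a < A := (List.pairwise_cons.mp hs3').1 a (by simp)
  have hab : b < a := (List.pairwise_cons.mp hs2').1 b (by simp)
  have htb : ∀ x ∈ t, x < b := by
    intro x hx
    exact (List.pairwise_cons.mp ((List.pairwise_cons.mp hs2').2)).1 x hx
  -- names of ulam values
  have hu2 : ulam (k + 4 - 2) = a := by
    show (ulamList (k + 2)).headI = a
    rw [hl2]; rfl
  have hu1 : ulam (k + 4 - 1) = A := by
    show (ulamList (k + 3)).headI = A
    rw [hl3]; rfl
  have hu0 : ulam (k + 4) = nextUlam (ulamList (k + 3)) := by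
    show (ulamList (k + 4)).headI = _
    rw [show k + 4 = (k + 1) + 3 from rfl, ulamList_succ]; rfl
  -- existence for the next step
  have hex := exists_next _ hs3 A a (b :: t) hl3 (by omega)
  have hnu : nextUlam (ulamList (k + 3)) = Nat.find hex := dif_pos hex
  intro hcon
  rw [hu0, hu1, hu2, hnu] at hcon
  -- the candidate A + b is strictly between A and A + a, with a unique representation
  have hcand1 : (ulamList (k + 3)).headI < A + b := by
    rw [hl3]; show A < A + b; omega
  have hcand2 : ulamRepCount (ulamList (k + 3)) (A + b) = 1 := by
    refine repCount_eq_one _ hs3 A (a :: b :: t) hl3 b (by simp) ?_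
    intro p q hp hq hpq
    have hqa : q ≤ a := by
      rcases List.mem_cons.mp hq with rfl | h
      · exact le_refl _
      rcases List.mem_cons.mp h with rfl | h'
      · omega
      · have := htb q h'; omega
    have hpb : p ≤ b := by
      rcases List.mem_cons.mp hp with rfl | h
      · omega
      rcases List.mem_cons.mp h with rfl | h'
      · exact le_refl _
      · exact le_of_lt (htb p h')
    omega
  have hle : Nat.find hex ≤ A + b := Nat.find_le ⟨hcand1, hcand2⟩
  omega
end
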